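/- (Magnus) If F is a free group and f ∈ γₙ(F) is written as f = 1 + φ under the Magnus embedding F → R sending the i-th free generator to 1+ξᵢ, then all homogeneous components of φ of degree less than n vanish. -/

import Mathlib

/-- The ring `R` of formal power series with rational coefficients in the
non-commuting indeterminates `ξ₁, …, ξ_q`, realized as power series in a central
grading variable with coefficients in the free (noncommutative) `ℚ`-algebra on
`q` generators; the homogeneous component of degree `n` of an element is its
`n`-th coefficient. -/
abbrev MagnusRing (q : ℕ) : Type := PowerSeries (FreeAlgebra ℚ (Fin q))

/-- The indeterminate `ξᵢ`, a homogeneous element of degree 1. -/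
noncomputable def xi {q : ℕ} (i : Fin q) : MagnusRing q :=
  PowerSeries.mk fun n => if n = 1 then FreeAlgebra.ι ℚ i else 0

lemma magV_mul_left {q m : ℕ} {a b : MagnusRing q}
    (hb : ∀ j < m, PowerSeries.coeff j b = 0) {k : ℕ} (hk : k < m) :
    PowerSeries.coeff (R := FreeAlgebra ℚ (Fin q)) k (a * b) = 0 := by
  rw [PowerSeries.coeff_mul]
  apply Finset.sum_eq_zero
  rintro ⟨i, j⟩ hij
  rw [Finset.HasAntidiagonal.mem_antidiagonal] at hij
  rw [hb j (by omega), mul_zero]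

lemma magV_mul_right {q m : ℕ} {a b : MagnusRing q}
    (ha : ∀ j < m, PowerSeries.coeff j a = 0) {k : ℕ} (hk : k < m) :
    PowerSeries.coeff (R := FreeAlgebra ℚ (Fin q)) k (a * b) = 0 := by
  rw [PowerSeries.coeff_mul]
  apply Finset.sum_eq_zero
  rintro ⟨i, j⟩ hij
  rw [Finset.HasAntidiagonal.mem_antidiagonal] at hij
  rw [ha i (by omega), zero_mul]

lemma magV_mul_add {q s t : ℕ} {a b : MagnusRing q}
    (ha : ∀ j < s, PowerSeries.coeff j a = 0)
    (hb : ∀ j < t, PowerSeries.coeff j b = 0) {k : ℕ} (hk : k < s + t) :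
    PowerSeries.coeff (R := FreeAlgebra ℚ (Fin q)) k (a * b) = 0 := by
  rw [PowerSeries.coeff_mul]
  apply Finset.sum_eq_zero
  rintro ⟨i, j⟩ hij
  rw [Finset.HasAntidiagonal.mem_antidiagonal] at hij
  by_cases hi : i < s
  · rw [ha i hi, zero_mul]
  · rw [hb j (by omega), mul_zero]

open scoped commutatorElement

/-- (Magnus) If `f` lies in the `n`-th term of the lower central series of the
free group `F` (here `lowerCentralSeries F m` is `γ_{m+1}(F)` of the paper, so
`f ∈ γ_{m+1}(F)`) and `μ f = 1 + φ` under the Magnus embedding `xᵢ ↦ 1 + ξᵢ`,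
then every homogeneous component of `φ` of degree `< m + 1` vanishes. -/
theorem magnus_lowerCentralSeries_homogeneous_components_vanish {q : ℕ}
    (μ : FreeGroup (Fin q) →* (MagnusRing q)ˣ)
    (hμ : ∀ i : Fin q, (μ (FreeGroup.of i) : MagnusRing q) = 1 + xi i)
    (m : ℕ) (f : FreeGroup (Fin q)) (hf : f ∈ Subgroup.lowerCentralSeries (⊤ : Subgroup (FreeGroup (Fin q))) m)
    (k : ℕ) (hk : k < m + 1) :
    PowerSeries.coeff (R := FreeAlgebra ℚ (Fin q)) k ((μ f : MagnusRing q) - 1) = 0 := by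
  -- The constant coefficient of every μ f is 1.
  have hconst : ∀ g : FreeGroup (Fin q),
      ∀ j < 1, PowerSeries.coeff (R := FreeAlgebra ℚ (Fin q)) j ((μ g : MagnusRing q) - 1) = 0 := by
    have hhom : (Units.map (PowerSeries.constantCoeff (R := FreeAlgebra ℚ (Fin q))).toMonoidHom).comp μ
        = 1 := by
      apply FreeGroup.ext_hom
      intro i
      ext
      simp [hμ i, xi, ← PowerSeries.coeff_zero_eq_constantCoeff]
    intro g j hj
    interval_cases j
    have := congrArg Units.val (DFunLike.congr_fun hhom g)
    simp only [MonoidHom.coe_comp, Function.comp_apply, Units.coe_map,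
      RingHom.toMonoidHom_eq_coe, MonoidHom.coe_coe, MonoidHom.one_apply, Units.val_one] at this
    rw [map_sub, PowerSeries.coeff_zero_eq_constantCoeff]
    simp [this]
  have key : ∀ n : ℕ, ∀ g ∈ Subgroup.lowerCentralSeries (⊤ : Subgroup (FreeGroup (Fin q))) n,
      ∀ j < n + 1, PowerSeries.coeff (R := FreeAlgebra ℚ (Fin q)) j ((μ g : MagnusRing q) - 1) = 0 := by
    intro n
    induction n with
    | zero => exact fun g _ => hconst g
    | succ n ih =>
      -- the subgroup of elements whose Magnus expansion vanishes below degree n+2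
      let L : Subgroup (FreeGroup (Fin q)) :=
      { carrier := {g | ∀ j < n + 2,
          PowerSeries.coeff (R := FreeAlgebra ℚ (Fin q)) j ((μ g : MagnusRing q) - 1) = 0}
        one_mem' := by intro j hj; simp
        mul_mem' := by
          intro a b ha hb j hj
          have hdecomp : (μ (a * b) : MagnusRing q) - 1 =
              ((μ a : MagnusRing q) - 1) +
                (μ a : MagnusRing q) * ((μ b : MagnusRing q) - 1) := by
            rw [map_mul, Units.val_mul]; noncomm_ring
          rw [hdecomp, map_add, ha j hj, magV_mul_left hb hj, add_zero]
        inv_mem' := by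
          intro a ha j hj
          have h1 : (((μ a)⁻¹ : (MagnusRing q)ˣ) : MagnusRing q) * (μ a : MagnusRing q) = 1 :=
            Units.inv_mul _
          have hdecomp : (μ a⁻¹ : MagnusRing q) - 1 =
              -((((μ a)⁻¹ : (MagnusRing q)ˣ) : MagnusRing q) * ((μ a : MagnusRing q) - 1)) := by
            rw [map_inv, mul_sub, h1, mul_one, neg_sub]
          rw [hdecomp, map_neg, magV_mul_left ha hj, neg_zero] }
      intro g hg
      have : Subgroup.lowerCentralSeries (⊤ : Subgroup (FreeGroup (Fin q))) (n + 1) ≤ L := by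
        rw [Subgroup.lowerCentralSeries_succ, Subgroup.commutator_le]
        intro x hx y _
        -- x ∈ LCS n, so μ x - 1 vanishes below n+1; μ y - 1 vanishes below 1
        have hxv := ih x hx
        have hyv := hconst y
        intro j hj
        set A : MagnusRing q := (μ x : MagnusRing q)
        set B : MagnusRing q := (μ y : MagnusRing q)
        set A' : MagnusRing q := (((μ x)⁻¹ : (MagnusRing q)ˣ) : MagnusRing q)
        set B' : MagnusRing q := (((μ y)⁻¹ : (MagnusRing q)ˣ) : MagnusRing q)
        have hA : A * A' = 1 := Units.mul_inv _
        have hB : B * B' = 1 := Units.mul_inv _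
        have hval : (μ ⁅x, y⁆ : MagnusRing q) = A * B * A' * B' := by
          simp only [commutatorElement_def, map_mul, map_inv, Units.val_mul]
          rfl
        have hexpand : (μ ⁅x, y⁆ : MagnusRing q) - 1 =
            ((A - 1) * (B - 1) - (B - 1) * (A - 1)) * (A' * B') := by
          rw [hval]
          have h2 : B * A * (A' * B') = 1 := by
            rw [mul_assoc, ← mul_assoc A A' B', hA, one_mul, hB]
          have h3 : (A - 1) * (B - 1) - (B - 1) * (A - 1) = A * B - B * A := by
            noncomm_ring
          rw [h3, sub_mul, h2, ← mul_assoc]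
        rw [hexpand]
        apply magV_mul_right _ hj
        intro i hi
        rw [map_sub]
        rw [magV_mul_add hxv hyv (by omega : i < (n+1) + 1),
            magV_mul_add hyv hxv (by omega : i < 1 + (n+1)), sub_zero]
      exact fun j hj => this hg j hj
  exact key m f hf k hk
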